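/- Let $n, s, k$ be positive integers with $k \ge 2$, $s \ge 1$, $n \ge 2k + 4$ and $n \ge (k+1)s + 1$. If $s > 1$, then the signless Laplacian spectral radius of the graph $sK_1 \vee ((ks+1)K_1 \cup K_{n-(k+1)s-1})$ is at most the signless Laplacian spectral radius of the graph $K_1 \vee ((k+1)K_1 \cup K_{n-k-2})$ (the $s=1$ member of this family). -/

import Mathlib

open Classical in
/-- The adjacency matrix of a simple graph, with real entries. -/
noncomputable def adjMat {V : Type} [Fintype V] (G : SimpleGraph V) : Matrix V V ℝ :=
  fun i j => if G.Adj i j then 1 else 0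

/-- The largest real eigenvalue of a real matrix. -/
noncomputable def maxEig {V : Type} [Fintype V] (M : Matrix V V ℝ) : ℝ :=
  sSup {t : ℝ | ∃ x : V → ℝ, x ≠ 0 ∧ M.mulVec x = t • x}

/-- The spectral radius (largest adjacency eigenvalue) of a graph. -/
noncomputable def specRad {V : Type} [Fintype V] (G : SimpleGraph V) : ℝ :=
  maxEig (adjMat G)

/-- The signless Laplacian matrix `Q(G) = D(G) + A(G)`. -/
noncomputable def qMat {V : Type} [Fintype V] [DecidableEq V] (G : SimpleGraph V) :
    Matrix V V ℝ :=
  Matrix.diagonal (fun v => ∑ w, adjMat G v w) + adjMat G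

/-- The signless Laplacian spectral radius of a graph. -/
noncomputable def qRad {V : Type} [Fintype V] [DecidableEq V] (G : SimpleGraph V) : ℝ :=
  maxEig (qMat G)

/-- The graph `K_s ∨ (a K_1 ∪ K_{n-s-a})` on vertex set `Fin n`:
the first `s` vertices form a clique joined to everything, the next `a` vertices are
independent, and the last `n - s - a` vertices form a clique. -/
def modelA (n s a : ℕ) : SimpleGraph (Fin n) where
  Adj i j := i ≠ j ∧ ((i : ℕ) < s ∨ (j : ℕ) < s ∨ (s + a ≤ (i : ℕ) ∧ s + a ≤ (j : ℕ)))
  symm := ⟨by rintro i j ⟨h1, h2⟩; exact ⟨h1.symm, by tauto⟩⟩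
  loopless := ⟨fun i h => h.1 rfl⟩

/-- The graph `s K_1 ∨ (a K_1 ∪ K_{n-s-a})` on vertex set `Fin n`:
the first `s` vertices are independent but joined to everything else, the next `a`
vertices are independent, and the last `n - s - a` vertices form a clique. -/
def modelB (n s a : ℕ) : SimpleGraph (Fin n) where
  Adj i j := i ≠ j ∧ (((i : ℕ) < s ∧ ¬ (j : ℕ) < s) ∨ ((j : ℕ) < s ∧ ¬ (i : ℕ) < s) ∨
    (s + a ≤ (i : ℕ) ∧ s + a ≤ (j : ℕ)))
  symm := ⟨by rintro i j ⟨h1, h2⟩; exact ⟨h1.symm, by tauto⟩⟩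
  loopless := ⟨fun i h => h.1 rfl⟩

/-- `M` is a matching of `G`: a set of pairwise disjoint edges of `G`. -/
def IsMatchingIn {V : Type} (G : SimpleGraph V) (M : Finset (Sym2 V)) : Prop :=
  (↑M : Set (Sym2 V)) ⊆ G.edgeSet ∧
    ∀ e ∈ M, ∀ f ∈ M, e ≠ f → ∀ v : V, ¬(v ∈ e ∧ v ∈ f)

/-- `H` is an `S(k)`-factor of `G`: a spanning subgraph of `G` each of whose connected
components is isomorphic to a star `K_{1,m}` with `1 ≤ m ≤ k`. -/
def IsSkFactor {V : Type} [Fintype V] (G H : SimpleGraph V) (k : ℕ) : Prop :=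
  H ≤ G ∧ ∀ c : H.ConnectedComponent, ∃ m : ℕ, 1 ≤ m ∧ m ≤ k ∧
    Nonempty ((H.induce c.supp) ≃g completeBipartiteGraph Unit (Fin m))

noncomputable def gdeg {n : ℕ} (G : SimpleGraph (Fin n)) (u : Fin n) : ℝ := ∑ w, adjMat G u w

lemma adjMat_apply {V : Type} [Fintype V] (G : SimpleGraph V) (u w : V) (h : G.Adj u w) :
    adjMat G u w = 1 := by simp [adjMat, h]

lemma adjMat_apply_not {V : Type} [Fintype V] (G : SimpleGraph V) (u w : V) (h : ¬ G.Adj u w) :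
    adjMat G u w = 0 := by simp [adjMat, h]

lemma adjMat_nonneg {V : Type} [Fintype V] (G : SimpleGraph V) (u w : V) :
    0 ≤ adjMat G u w := by
  by_cases h : G.Adj u w <;> simp [adjMat, h]

lemma gdeg_nonneg {n : ℕ} (G : SimpleGraph (Fin n)) (u : Fin n) : 0 ≤ gdeg G u :=
  Finset.sum_nonneg fun w _ => adjMat_nonneg G u w

open Classical in
lemma gdeg_eq_card {n : ℕ} (G : SimpleGraph (Fin n)) (u : Fin n) :
    gdeg G u = ((Finset.univ.filter (fun w => G.Adj u w)).card : ℝ) := by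
  rw [gdeg, ← Finset.sum_boole]
  exact Finset.sum_congr rfl fun w _ => by by_cases h : G.Adj u w <;> simp [adjMat, h]

lemma qMat_mulVec {n : ℕ} (G : SimpleGraph (Fin n)) (x : Fin n → ℝ) (u : Fin n) :
    (qMat G).mulVec x u = gdeg G u * x u + ∑ w, adjMat G u w * x w := by
  simp only [qMat, Matrix.mulVec, dotProduct, Matrix.add_apply, gdeg, add_mul]
  rw [Finset.sum_add_distrib]
  congr 1
  rw [Finset.sum_eq_single u]
  · simp [Matrix.diagonal]
  · intro b _ hb; simp [Matrix.diagonal_apply_ne' _ hb]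
  · simp

open Finset in
lemma eig_le_edge_bound {n : ℕ} (G : SimpleGraph (Fin n)) (C : ℝ) (hC : 0 ≤ C)
    (hE : ∀ u v : Fin n, G.Adj u v → gdeg G u + gdeg G v ≤ C)
    {t : ℝ} (ht : ∃ x : Fin n → ℝ, x ≠ 0 ∧ (qMat G).mulVec x = t • x) : t ≤ C := by
  classical
  obtain ⟨x, hx0, hev⟩ := ht
  have hex : ∃ i, x i ≠ 0 := by
    by_contra h; push_neg at h; exact hx0 (funext h)
  obtain ⟨i, hi⟩ := hex
  obtain ⟨u, -, hu⟩ := Finset.exists_max_image Finset.univ (fun w => |x w|)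
    ⟨i, Finset.mem_univ i⟩
  set ε : ℝ := if x u < 0 then -1 else 1 with hε
  set y : Fin n → ℝ := ε • x with hy
  have hyu : y u = |x u| := by
    rw [hy, hε]
    rcases lt_or_ge (x u) 0 with h | h
    · simp [h, abs_of_neg h]
    · simp [not_lt.2 h, abs_of_nonneg h]
  have hM : 0 < y u := by
    rw [hyu]; exact lt_of_lt_of_le (abs_pos.2 hi) (hu i (Finset.mem_univ i))
  have hyb : ∀ w, y w ≤ y u := by
    intro w
    rw [hyu]
    calc y w ≤ |y w| := le_abs_self _
    _ = |ε| * |x w| := by rw [hy]; simp [abs_mul]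
    _ ≤ |x w| := by
        have : |ε| = 1 := by rw [hε]; by_cases h : x u < 0 <;> simp [h]
        simp [this]
    _ ≤ |x u| := hu w (Finset.mem_univ w)
  have hevy : ∀ v, t * y v = gdeg G v * y v + ∑ w, adjMat G v w * y w := by
    intro v
    have h1 : (qMat G).mulVec y v = t * y v := by
      rw [hy, Matrix.mulVec_smul, hev]
      simp [mul_comm, mul_left_comm, mul_assoc]
    rw [← h1, qMat_mulVec]
  have sum_le : ∀ v : Fin n, ∀ c : ℝ, (∀ w, G.Adj v w → y w ≤ c) →
      ∑ w, adjMat G v w * y w ≤ gdeg G v * c := by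
    intro v c hc
    rw [gdeg, Finset.sum_mul]
    refine Finset.sum_le_sum fun w _ => ?_
    by_cases h : G.Adj v w
    · rw [adjMat_apply G v w h]; simpa using hc w h
    · rw [adjMat_apply_not G v w h]; simp
  by_cases hN : ∃ v, G.Adj u v
  · obtain ⟨v₁, hv₁⟩ := hN
    have hNne : (Finset.univ.filter (fun w => G.Adj u w)).Nonempty :=
      ⟨v₁, by simp [hv₁]⟩
    obtain ⟨v₀, hv₀mem, hv₀⟩ := Finset.exists_max_image _ y hNne
    have hadj : G.Adj u v₀ := by simpa using hv₀mem
    have key1 : t * y u ≤ gdeg G u * y u + gdeg G u * y v₀ := by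
      rw [hevy u]
      have := sum_le u (y v₀) (fun w hw => hv₀ w (by simp [hw]))
      linarith
    by_cases hb : y v₀ ≤ 0
    · have h2 : gdeg G u * y v₀ ≤ 0 :=
        mul_nonpos_of_nonneg_of_nonpos (gdeg_nonneg G u) hb
      have h3 : t * y u ≤ gdeg G u * y u := by linarith
      have h4 : t ≤ gdeg G u := le_of_mul_le_mul_right (by linarith [h3]; ) hM
      calc t ≤ gdeg G u := h4
      _ ≤ gdeg G u + gdeg G v₀ := by linarith [gdeg_nonneg G v₀]
      _ ≤ C := hE u v₀ hadj
    · push_neg at hb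
      have key2 : t * y v₀ ≤ gdeg G v₀ * y v₀ + gdeg G v₀ * y u := by
        rw [hevy v₀]
        have := sum_le v₀ (y u) (fun w _ => hyb w)
        linarith
      have hsum : t * (y u + y v₀) ≤ (gdeg G u + gdeg G v₀) * (y u + y v₀) := by
        ring_nf
        nlinarith [key1, key2]
      have ht' : t ≤ gdeg G u + gdeg G v₀ :=
        le_of_mul_le_mul_right (by linarith [hsum]) (by linarith : (0:ℝ) < y u + y v₀)
      exact le_trans ht' (hE u v₀ hadj)
  · push_neg at hN
    have hdeg : gdeg G u = 0 := by
      rw [gdeg]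
      exact Finset.sum_eq_zero fun w _ => adjMat_apply_not G u w (hN w)
    have hsum0 : ∑ w, adjMat G u w * y w = 0 :=
      Finset.sum_eq_zero fun w _ => by rw [adjMat_apply_not G u w (hN w), zero_mul]
    have := hevy u
    rw [hdeg, hsum0, zero_mul, zero_add] at this
    have : t = 0 := by
      rcases mul_eq_zero.1 this with h | h
      · exact h
      · exact absurd h (ne_of_gt hM)
    linarith

section Ray
open scoped RealInnerProductSpace
open Matrix
lemma le_maxEig_of_rayleigh {n : ℕ} (M : Matrix (Fin n) (Fin n) ℝ) (hM : M.IsHermitian)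
    (hbdd : BddAbove {t : ℝ | ∃ x : Fin n → ℝ, x ≠ 0 ∧ M.mulVec x = t • x})
    (x : Fin n → ℝ) (hx : x ≠ 0) (c : ℝ) (hc : c * (x ⬝ᵥ x) ≤ x ⬝ᵥ M.mulVec x) :
    c ≤ maxEig M := by
  classical
  have hex : ∃ i, x i ≠ 0 := by
    by_contra h; push_neg at h; exact hx (funext h)
  obtain ⟨j, hj⟩ := hex
  haveI : Nonempty (Fin n) := ⟨j⟩
  obtain ⟨i₀, -, hmax⟩ := Finset.exists_max_image Finset.univ hM.eigenvalues
    Finset.univ_nonempty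
  set lam := hM.eigenvalues i₀ with hlam
  set b := hM.eigenvectorBasis with hb
  have hmem : lam ∈ {t : ℝ | ∃ x : Fin n → ℝ, x ≠ 0 ∧ M.mulVec x = t • x} := by
    refine ⟨⇑(b i₀), ?_, hM.mulVec_eigenvectorBasis i₀⟩
    have hne := b.orthonormal.ne_zero i₀
    intro h
    apply hne
    ext w
    exact congrFun h w
  have hinner : ∀ y z : EuclideanSpace ℝ (Fin n), ⟪y, z⟫ = (y : Fin n → ℝ) ⬝ᵥ (z : Fin n → ℝ) := by
    intro y z
    simp [PiLp.inner_apply, RCLike.inner_apply, dotProduct, mul_comm]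
  have hMT : Mᵀ = M := by
    ext i j
    have := congrFun (congrFun hM i) j
    simpa [Matrix.conjTranspose_apply] using this
  set x' : EuclideanSpace ℝ (Fin n) := WithLp.toLp 2 x with hx'
  set z' : EuclideanSpace ℝ (Fin n) := WithLp.toLp 2 (M.mulVec x) with hz'
  have hP := b.sum_inner_mul_inner x' z'
  have hQ := b.sum_inner_mul_inner x' x'
  have heig : ∀ i : Fin n, ⟪b i, z'⟫ = hM.eigenvalues i * ⟪b i, x'⟫ := by
    intro i
    rw [hinner, hinner]
    have h1 : (⇑(b i) : Fin n → ℝ) ⬝ᵥ M.mulVec x = (M.mulVec ⇑(b i)) ⬝ᵥ x := by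
      rw [dotProduct_mulVec, ← Matrix.mulVec_transpose, hMT]
    show (⇑(b i) : Fin n → ℝ) ⬝ᵥ M.mulVec x = hM.eigenvalues i * ((⇑(b i) : Fin n → ℝ) ⬝ᵥ x)
    rw [h1, hM.mulVec_eigenvectorBasis i, smul_dotProduct, smul_eq_mul]
  have hcomm : ∀ i : Fin n, ⟪b i, x'⟫ = ⟪x', b i⟫ := fun i => real_inner_comm _ _
  have hray : x ⬝ᵥ M.mulVec x ≤ lam * (x ⬝ᵥ x) := by
    calc x ⬝ᵥ M.mulVec x = ⟪x', z'⟫ := (hinner x' z').symm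
    _ = ∑ i, ⟪x', b i⟫ * ⟪b i, z'⟫ := hP.symm
    _ = ∑ i, hM.eigenvalues i * (⟪x', b i⟫ * ⟪x', b i⟫) := by
        refine Finset.sum_congr rfl fun i _ => ?_
        rw [heig i, hcomm i]; ring
    _ ≤ ∑ i, lam * (⟪x', b i⟫ * ⟪x', b i⟫) := by
        refine Finset.sum_le_sum fun i _ => ?_
        have h1 : hM.eigenvalues i ≤ lam := hmax i (Finset.mem_univ i)
        nlinarith [mul_self_nonneg (⟪x', b i⟫ : ℝ)]
    _ = lam * ∑ i, ⟪x', b i⟫ * ⟪b i, x'⟫ := by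
        rw [Finset.mul_sum]
        refine Finset.sum_congr rfl fun i _ => ?_
        rw [hcomm i]
    _ = lam * ⟪x', x'⟫ := by rw [hQ]
    _ = lam * (x ⬝ᵥ x) := by rw [hinner]
  have hpos : 0 < x ⬝ᵥ x := by
    have h1 : x j * x j ≤ x ⬝ᵥ x := by
      rw [dotProduct]
      exact Finset.single_le_sum (fun w _ => mul_self_nonneg (x w)) (Finset.mem_univ j)
    nlinarith [mul_self_pos.2 hj]
  have hclam : c ≤ lam := by
    have : c * (x ⬝ᵥ x) ≤ lam * (x ⬝ᵥ x) := le_trans hc hray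
    exact le_of_mul_le_mul_right this hpos
  exact le_trans hclam (le_csSup hbdd hmem)
end Ray

section Counting
open Finset
lemma card_filter_fin (n : ℕ) (p : ℕ → Prop) [DecidablePred p] :
    #(Finset.univ.filter fun w : Fin n => p w.val) = #((Finset.range n).filter p) := by
  rw [← Finset.card_image_of_injective _ Fin.val_injective]
  congr 1
  ext a
  simp only [Finset.mem_image, Finset.mem_filter, Finset.mem_univ, true_and, Finset.mem_range]
  constructor
  · rintro ⟨w, hw, rfl⟩; exact ⟨w.isLt, hw⟩
  · rintro ⟨ha, hp⟩; exact ⟨⟨a, ha⟩, hp, rfl⟩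

lemma card_range_ge (n s : ℕ) : #((Finset.range n).filter fun m => s ≤ m) = n - s := by
  have : (Finset.range n).filter (fun m => s ≤ m) = Finset.Ico s n := by
    ext a; simp [Finset.mem_range, Finset.mem_Ico]; omega
  rw [this, Nat.card_Ico]

lemma card_range_lt (n s : ℕ) : #((Finset.range n).filter fun m => m < s) = min s n := by
  have : (Finset.range n).filter (fun m => m < s) = Finset.range (min s n) := by
    ext a; simp [Finset.mem_range]; omega
  rw [this, Finset.card_range]

-- the three degree computations for modelB
lemma modelB_adj (n s a : ℕ) (u w : Fin n) :
    (modelB n s a).Adj u w ↔ u ≠ w ∧ (((u : ℕ) < s ∧ ¬ (w : ℕ) < s) ∨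
      ((w : ℕ) < s ∧ ¬ (u : ℕ) < s) ∨ (s + a ≤ (u : ℕ) ∧ s + a ≤ (w : ℕ))) := Iff.rfl

lemma deg_B_lo {n s a : ℕ} (u : Fin n) (hu : (u : ℕ) < s) :
    gdeg (modelB n s a) u = ((n - s : ℕ) : ℝ) := by
  classical
  rw [gdeg_eq_card]
  congr 1
  have : (Finset.univ.filter fun w => (modelB n s a).Adj u w)
      = Finset.univ.filter fun w : Fin n => s ≤ (w : ℕ) := by
    ext w
    simp only [Finset.mem_filter, Finset.mem_univ, true_and, modelB_adj]
    constructor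
    · rintro ⟨hne, h | h | h⟩ <;> omega
    · intro hw
      refine ⟨?_, Or.inl ⟨hu, by omega⟩⟩
      intro h; rw [h] at hu; omega
  rw [this, card_filter_fin n (fun m => s ≤ m), card_range_ge]

lemma deg_B_mid {n s a : ℕ} (u : Fin n) (hu1 : s ≤ (u : ℕ)) (hu2 : (u : ℕ) < s + a) :
    gdeg (modelB n s a) u = (s : ℝ) := by
  classical
  rw [gdeg_eq_card]
  have hsn : s ≤ n := le_trans hu1 (le_of_lt u.isLt)
  have : (Finset.univ.filter fun w => (modelB n s a).Adj u w)
      = Finset.univ.filter fun w : Fin n => (w : ℕ) < s := by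
    ext w
    simp only [Finset.mem_filter, Finset.mem_univ, true_and, modelB_adj]
    constructor
    · rintro ⟨hne, h | h | h⟩ <;> omega
    · intro hw
      refine ⟨?_, Or.inr (Or.inl ⟨hw, by omega⟩)⟩
      intro h; rw [h] at hu1; omega
  rw [this, card_filter_fin n (fun m => m < s), card_range_lt]
  congr 1
  omega

lemma deg_B_hi {n s a : ℕ} (u : Fin n) (hu : s + a ≤ (u : ℕ)) :
    gdeg (modelB n s a) u = ((s + (n - (s + a)) - 1 : ℕ) : ℝ) := by
  classical
  rw [gdeg_eq_card]
  have hsan : s + a < n := lt_of_le_of_lt hu u.isLt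
  have h1 : (Finset.univ.filter fun w => (modelB n s a).Adj u w)
      = Finset.univ.filter fun w : Fin n => (w : ℕ) ≠ (u : ℕ) ∧ ((w : ℕ) < s ∨ s + a ≤ (w : ℕ)) := by
    ext w
    simp only [Finset.mem_filter, Finset.mem_univ, true_and, modelB_adj]
    constructor
    · rintro ⟨hne, h | h | h⟩ <;>
        exact ⟨fun hh => hne (Fin.ext hh).symm, by omega⟩
    · rintro ⟨hne, h | h⟩
      · exact ⟨fun hh => hne (congrArg Fin.val hh.symm), Or.inr (Or.inl ⟨h, by omega⟩)⟩
      · exact ⟨fun hh => hne (congrArg Fin.val hh.symm), Or.inr (Or.inr ⟨hu, h⟩)⟩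
  rw [h1, card_filter_fin n (fun m => m ≠ (u : ℕ) ∧ (m < s ∨ s + a ≤ m))]
  congr 1
  have h2 : (Finset.range n).filter (fun m => m ≠ (u : ℕ) ∧ (m < s ∨ s + a ≤ m))
      = ((Finset.range n).filter (fun m => m < s ∨ s + a ≤ m)).erase (u : ℕ) := by
    ext m
    simp only [Finset.mem_filter, Finset.mem_range, Finset.mem_erase]
    tauto
  rw [h2, Finset.card_erase_of_mem (by simp [Finset.mem_filter, u.isLt]; omega)]
  congr 1
  have h3 : (Finset.range n).filter (fun m => m < s ∨ s + a ≤ m)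
      = Finset.range s ∪ Finset.Ico (s + a) n := by
    ext m
    simp only [Finset.mem_filter, Finset.mem_range, Finset.mem_union, Finset.mem_Ico]
    omega
  rw [h3, Finset.card_union_of_disjoint (by
    rw [Finset.disjoint_left]
    intro m hm1 hm2
    simp only [Finset.mem_range] at hm1
    simp only [Finset.mem_Ico] at hm2
    omega)]
  rw [Finset.card_range, Nat.card_Ico]

end Counting

lemma gdeg_le {n : ℕ} (G : SimpleGraph (Fin n)) (u : Fin n) : gdeg G u ≤ (n : ℝ) - 1 := by
  classical
  rw [gdeg_eq_card]
  have hsub : (Finset.univ.filter fun w => G.Adj u w) ⊆ Finset.univ.erase u := by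
    intro w hw
    simp only [Finset.mem_filter, Finset.mem_univ, true_and] at hw
    exact Finset.mem_erase.2 ⟨(G.ne_of_adj hw).symm, Finset.mem_univ w⟩
  have hcard : (Finset.univ.filter fun w => G.Adj u w).card ≤ n - 1 := by
    have := Finset.card_le_card hsub
    rwa [Finset.card_erase_of_mem (Finset.mem_univ u), Finset.card_univ, Fintype.card_fin] at this
  have hn : 1 ≤ n := u.pos
  calc (((Finset.univ.filter fun w => G.Adj u w).card : ℕ) : ℝ) ≤ ((n - 1 : ℕ) : ℝ) := by
        exact_mod_cast hcard
  _ = (n : ℝ) - 1 := by push_cast [Nat.cast_sub hn]; ring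

lemma qRad_le_of_edge_bound {n : ℕ} (G : SimpleGraph (Fin n)) (C : ℝ) (hC : 0 ≤ C)
    (hE : ∀ u v : Fin n, G.Adj u v → gdeg G u + gdeg G v ≤ C) : qRad G ≤ C := by
  rw [qRad, maxEig]
  exact Real.sSup_le (fun t ht => eig_le_edge_bound G C hC hE ht) hC

lemma qMat_isHermitian {n : ℕ} (G : SimpleGraph (Fin n)) : (qMat G).IsHermitian := by
  classical
  show (qMat G).conjTranspose = qMat G
  ext i j
  simp only [Matrix.conjTranspose_apply, qMat, Matrix.add_apply, star_trivial]
  congr 1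
  · by_cases h : i = j
    · subst h; rfl
    · rw [Matrix.diagonal_apply_ne _ (Ne.symm h), Matrix.diagonal_apply_ne _ h]
  · by_cases h : G.Adj i j
    · rw [adjMat_apply _ _ _ h, adjMat_apply _ _ _ (G.adj_symm h)]
    · rw [adjMat_apply_not _ _ _ h, adjMat_apply_not _ _ _ (fun hh => h (G.adj_symm hh))]

lemma qRad_bddAbove {n : ℕ} (G : SimpleGraph (Fin n)) (hn : 1 ≤ n) :
    BddAbove {t : ℝ | ∃ x : Fin n → ℝ, x ≠ 0 ∧ (qMat G).mulVec x = t • x} := by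
  refine ⟨2 * ((n : ℝ) - 1), fun t ht => ?_⟩
  refine eig_le_edge_bound G _ ?_ (fun u v _ => ?_) ht
  · have : (1 : ℝ) ≤ n := by exact_mod_cast hn
    linarith
  · linarith [gdeg_le G u, gdeg_le G v]

/-- Lemma: for `k ≥ 2`, `n ≥ 2k + 4`, `n ≥ (k+1)s + 1` and `s > 1`,
`q(sK_1 ∨ ((ks+1)K_1 ∪ K_{n-(k+1)s-1})) ≤ q(K_1 ∨ ((k+1)K_1 ∪ K_{n-k-2}))`. -/
theorem stmt_13 (n s k : ℕ) (hk : 2 ≤ k) (hs : 1 ≤ s)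
    (h1 : 2 * k + 4 ≤ n) (h2 : (k + 1) * s + 1 ≤ n) (hs1 : 1 < s) :
    qRad (modelB n s (k * s + 1)) ≤ qRad (modelB n 1 (k + 1)) := by
  classical
  have hnR : (2 * k + 4 : ℝ) ≤ (n : ℝ) := by exact_mod_cast h1
  have hkR : (2 : ℝ) ≤ (k : ℝ) := by exact_mod_cast hk
  set a := k * s + 1 with ha
  have hka : 2 * k + 1 ≤ a := by
    have : 2 * k ≤ k * s := by
      calc 2 * k = k * 2 := by ring
      _ ≤ k * s := Nat.mul_le_mul_left k hs1
    omega
  have hsa : s + a ≤ n := by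
    have he : (k + 1) * s + 1 = k * s + s + 1 := by ring
    omega
  set C : ℝ := 2 * ((n : ℝ) - k - 2) with hCdef
  have hC0 : 0 ≤ C := by rw [hCdef]; linarith
  -- upper bound for the big graph
  have hupper : qRad (modelB n s a) ≤ C := by
    apply qRad_le_of_edge_bound _ _ hC0
    intro u v huv
    rw [modelB_adj] at huv
    obtain ⟨hne, hcase⟩ := huv
    have main : ∀ u' v' : Fin n, (u' : ℕ) < s → ¬ (v' : ℕ) < s →
        gdeg (modelB n s a) u' + gdeg (modelB n s a) v' ≤ C := by
      intro u' v' hu' hv'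
      rw [deg_B_lo u' hu']
      by_cases hv2 : (v' : ℕ) < s + a
      · rw [deg_B_mid v' (by omega) hv2]
        have key : (n - s) + s + (2 * k + 4) ≤ 2 * n := by omega
        have keyR : ((n - s : ℕ) : ℝ) + (s : ℝ) + (2 * (k : ℝ) + 4) ≤ 2 * (n : ℝ) := by
          exact_mod_cast key
        rw [hCdef]; linarith
      · rw [deg_B_hi v' (by omega)]
        have key : (n - s) + (s + (n - (s + a)) - 1) + (2 * k + 4) ≤ 2 * n := by omega
        have keyR : ((n - s : ℕ) : ℝ) + ((s + (n - (s + a)) - 1 : ℕ) : ℝ)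
            + (2 * (k : ℝ) + 4) ≤ 2 * (n : ℝ) := by exact_mod_cast key
        rw [hCdef]; linarith
    rcases hcase with h | h | h
    · exact main u v h.1 h.2
    · have := main v u h.1 h.2
      linarith
    · rw [deg_B_hi u h.1, deg_B_hi v h.2]
      have key : (s + (n - (s + a)) - 1) + (s + (n - (s + a)) - 1) + (2 * k + 4) ≤ 2 * n := by
        omega
      have keyR : ((s + (n - (s + a)) - 1 : ℕ) : ℝ) + ((s + (n - (s + a)) - 1 : ℕ) : ℝ)
          + (2 * (k : ℝ) + 4) ≤ 2 * (n : ℝ) := by exact_mod_cast key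
      rw [hCdef]; linarith
  have hlower : C ≤ qRad (modelB n 1 (k + 1)) := by
    set B2 := modelB n 1 (k + 1) with hB2
    set P : Fin n → Prop := fun v => (v : ℕ) = 0 ∨ k + 2 ≤ (v : ℕ) with hP
    set x : Fin n → ℝ := fun v => if P v then 1 else 0 with hxdef
    have hP0 : P ⟨0, by omega⟩ := by rw [hP]; left; rfl
    have hx : x ≠ 0 := by
      intro h
      have h0 := congrFun h ⟨0, by omega⟩
      rw [hxdef] at h0
      simp only [if_pos hP0, Pi.zero_apply] at h0
      exact one_ne_zero h0
    set S := Finset.univ.filter P with hS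
    have hScard : S.card = 1 + (n - (k + 2)) := by
      rw [hS]
      simp only [hP]
      rw [card_filter_fin n (fun m => m = 0 ∨ k + 2 ≤ m)]
      have he : (Finset.range n).filter (fun m => m = 0 ∨ k + 2 ≤ m)
          = {0} ∪ Finset.Ico (k + 2) n := by
        ext m
        simp only [Finset.mem_filter, Finset.mem_range, Finset.mem_union,
          Finset.mem_singleton, Finset.mem_Ico]
        omega
      rw [he, Finset.card_union_of_disjoint (by
        rw [Finset.disjoint_left]
        intro m hm1 hm2
        simp only [Finset.mem_singleton] at hm1
        simp only [Finset.mem_Ico] at hm2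
        omega), Finset.card_singleton, Nat.card_Ico]
    have key : ∀ u : Fin n, (if P u then C else 0) ≤ x u * ((qMat B2).mulVec x u) := by
      intro u
      by_cases hPu : P u
      · have hxu : x u = 1 := by rw [hxdef]; exact if_pos hPu
        rw [if_pos hPu, qMat_mulVec, hxu, one_mul, mul_one]
        have hinner : ∑ w, adjMat B2 u w * x w = ((S.card - 1 : ℕ) : ℝ) := by
          have step1 : ∀ w, adjMat B2 u w * x w = if (B2.Adj u w ∧ P w) then (1:ℝ) else 0 := by
            intro w
            by_cases hw1 : B2.Adj u w <;> by_cases hw2 : P w <;>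
              simp [adjMat, hw1, hw2, hxdef]
          rw [Finset.sum_congr rfl (fun w _ => step1 w), Finset.sum_boole]
          congr 1
          have hfe : Finset.univ.filter (fun w => B2.Adj u w ∧ P w) = S.erase u := by
            ext w
            simp only [Finset.mem_filter, Finset.mem_univ, true_and, Finset.mem_erase, hS]
            constructor
            · rintro ⟨hadj, hpw⟩
              exact ⟨(B2.ne_of_adj hadj).symm, hpw⟩
            · rintro ⟨hne, hpw⟩
              refine ⟨?_, hpw⟩
              rw [hB2, modelB_adj]
              refine ⟨hne.symm, ?_⟩
              have hwu : (w : ℕ) ≠ (u : ℕ) ∨ True := Or.inr trivial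
              rcases hPu with h0 | hhi <;> rcases hpw with w0 | whi
              · exfalso; exact hne (Fin.ext (by omega))
              · exact Or.inl ⟨by omega, by omega⟩
              · exact Or.inr (Or.inl ⟨by omega, by omega⟩)
              · exact Or.inr (Or.inr ⟨by omega, by omega⟩)
          rw [hfe, Finset.card_erase_of_mem]
          rw [hS]
          simp only [Finset.mem_filter, Finset.mem_univ, true_and]
          exact hPu
        rw [hinner]
        have hkn : k + 2 ≤ n := by omega
        rcases hPu with h0 | hhi
        · rw [hB2, deg_B_lo u (by omega : (u : ℕ) < 1), ← Nat.cast_add]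
          have key2 : 2 * n ≤ ((n - 1) + (S.card - 1)) + (2 * k + 4) := by
            rw [hScard]; omega
          have keyR : 2 * (n : ℝ) ≤ (((n - 1) + (S.card - 1) : ℕ) : ℝ) + 2 * (k : ℝ) + 4 := by
            exact_mod_cast key2
          rw [hCdef]; linarith
        · rw [hB2, deg_B_hi u (by omega : 1 + (k + 1) ≤ (u : ℕ)), ← Nat.cast_add]
          have key2 : 2 * n ≤ ((1 + (n - (1 + (k + 1))) - 1) + (S.card - 1)) + (2 * k + 4) := by
            rw [hScard]; omega
          have keyR : 2 * (n : ℝ) ≤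
              (((1 + (n - (1 + (k + 1))) - 1) + (S.card - 1) : ℕ) : ℝ) + 2 * (k : ℝ) + 4 := by
            exact_mod_cast key2
          rw [hCdef]; linarith
      · have hxu : x u = 0 := by rw [hxdef]; exact if_neg hPu
        rw [if_neg hPu, hxu, zero_mul]
    have hxx : dotProduct x x = ∑ u, if P u then (1:ℝ) else 0 := by
      rw [dotProduct]
      exact Finset.sum_congr rfl fun u _ => by by_cases h : P u <;> simp [hxdef, h]
    have hrq : C * (dotProduct x x) ≤ dotProduct x ((qMat B2).mulVec x) := by
      have hcx : C * (dotProduct x x) = ∑ u, if P u then C else 0 := by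
        rw [hxx, Finset.mul_sum]
        exact Finset.sum_congr rfl fun u _ => by by_cases h : P u <;> simp [h]
      rw [hcx, dotProduct]
      exact Finset.sum_le_sum fun u _ => key u
    have := le_maxEig_of_rayleigh (qMat B2) (qMat_isHermitian B2)
      (qRad_bddAbove B2 (by omega)) x hx C hrq
    rw [qRad]
    exact this
  linarith
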